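/- Conversely, if x : A → {0,1} satisfies ∑_{i:(i,j)∈A} x(i,j) = 1 for every j ≠ r and, for every j ≠ r and every S ⊆ V_j∖{r} with j ∈ S, the inequality ∑_{(i,k)∈A : i∈V_j∖S, k∈S} x(i,k) ≥ 1, then the arc set T = {a ∈ A : x(a)=1} is a spanning arborescence rooted at r in which, for every (s,t) ∈ R, the vertex t does not lie on the unique path from r to s. -/

import Mathlib

def IsPathIn {V : Type*} (T : Set (V × V)) (r j : V) (p : List V) : Prop :=
  p.head? = some r ∧ p.getLast? = some j ∧ p.Chain' (fun a b => (a, b) ∈ T)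

def IsSpanningArborescence {V : Type*} (T : Set (V × V)) (r : V) : Prop :=
  (∀ j : V, j ≠ r → ∃! i : V, (i, j) ∈ T) ∧ (∀ i : V, (i, r) ∉ T) ∧
    ∀ j : V, ∃! p : List V, IsPathIn T r j p

/-- Ancestor closure: vertices reachable from `j` by repeatedly taking `par`,
restricted to "good" vertices. -/
inductive Anc {V : Type*} (par : V → V) (good : V → Prop) (j : V) : V → Prop
  | base : Anc par good j j
  | step (k : V) : Anc par good j k → good (par k) → Anc par good j (par k)

/-- every integral feasible point of the Set-Based model
(constraints (2)–(4)) corresponds to a precedence-feasible spanning arborescence: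
`T = {a ∈ A : x a = 1}` is a spanning arborescence rooted at `r` and for every
`(s,t) ∈ R`, `t` does not lie on the unique path from `r` to `s`. -/
theorem stmt6 {V : Type*} [Fintype V] [DecidableEq V]
    (A : Finset (V × V)) (R : Finset (V × V)) (r : V) (x : V × V → ℝ)
    (hr : ∀ i : V, (i, r) ∉ A)
    (hirr : ∀ q ∈ R, q.1 ≠ q.2)
    (hx : ∀ a ∈ A, x a = 0 ∨ x a = 1)
    (hdeg : ∀ j : V, j ≠ r → ∑ a ∈ A.filter (fun a => a.2 = j), x a = 1)
    (hcut : ∀ j : V, j ≠ r → ∀ S : Finset V,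
      S ⊆ (Finset.univ.filter (fun i => (j, i) ∉ R)).erase r → j ∈ S →
      1 ≤ ∑ a ∈ A.filter (fun a =>
            a.1 ∈ Finset.univ.filter (fun i => (j, i) ∉ R) ∧ a.1 ∉ S ∧ a.2 ∈ S), x a) :
    IsSpanningArborescence {a : V × V | a ∈ A ∧ x a = 1} r ∧
      ∀ q ∈ R, ∀ p : List V,
        IsPathIn {a : V × V | a ∈ A ∧ x a = 1} r q.1 p → q.2 ∉ p := by
  classical
  set T : Set (V × V) := {a : V × V | a ∈ A ∧ x a = 1} with hTdef
  have memT : ∀ a : V × V, a ∈ T ↔ a ∈ A ∧ x a = 1 := fun a => Iff.rfl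
  have nonneg : ∀ a ∈ A, (0:ℝ) ≤ x a := by
    intro a ha; rcases hx a ha with h | h <;> simp [h]
  have sum_one : ∀ F : Finset (V × V), F ⊆ A → (1:ℝ) ≤ ∑ a ∈ F, x a →
      ∃ a ∈ F, x a = 1 := by
    intro F hF hsum
    by_contra h
    push_neg at h
    have hz : ∑ a ∈ F, x a = 0 := Finset.sum_eq_zero (fun a ha => by
      rcases hx a (hF ha) with h0 | h1
      · exact h0
      · exact absurd h1 (h a ha))
    rw [hz] at hsum; linarith
  -- unique in-arc for every non-root vertex
  have hpar : ∀ j : V, j ≠ r → ∃! i : V, (i, j) ∈ T := by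
    intro j hj
    have hsum := hdeg j hj
    obtain ⟨a, haF, hxa⟩ := sum_one _ (Finset.filter_subset _ _) (le_of_eq hsum.symm)
    have haA : a ∈ A := (Finset.mem_filter.mp haF).1
    have haj : a.2 = j := (Finset.mem_filter.mp haF).2
    have hae : (a.1, j) = a := by rw [← haj]
    refine ⟨a.1, ⟨by rw [hae]; exact haA, by rw [hae]; exact hxa⟩, ?_⟩
    intro i hi
    have hiA : (i, j) ∈ A := ((memT _).mp hi).1
    have hix : x (i, j) = 1 := ((memT _).mp hi).2
    have hiF : (i, j) ∈ A.filter (fun a => a.2 = j) :=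
      Finset.mem_filter.mpr ⟨hiA, rfl⟩
    by_contra hne
    have hne' : (i, j) ≠ a := fun h => hne (congrArg Prod.fst h)
    have hsub : ({(i, j), a} : Finset (V × V)) ⊆ A.filter (fun a => a.2 = j) := by
      intro c hc
      rcases Finset.mem_insert.mp hc with h | h
      · subst h; exact hiF
      · rw [Finset.mem_singleton] at h; subst h; exact haF
    have hle := Finset.sum_le_sum_of_subset_of_nonneg hsub
      (fun c hc _ => nonneg c (Finset.mem_filter.mp hc).1)
    rw [Finset.sum_pair hne', hsum, hix, hxa] at hle
    linarith
  -- a total parent function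
  obtain ⟨par, hparT, hparU⟩ : ∃ par : V → V, (∀ j, j ≠ r → (par j, j) ∈ T) ∧
      (∀ j, j ≠ r → ∀ i, (i, j) ∈ T → i = par j) := by
    refine ⟨fun j => if h : j ≠ r then (hpar j h).choose else j, ?_, ?_⟩
    · intro j hj; dsimp only; rw [dif_pos hj]; exact (hpar j hj).choose_spec.1
    · intro j hj i hi; dsimp only; rw [dif_pos hj]; exact (hpar j hj).choose_spec.2 i hi
  have noR : ∀ i : V, (i, r) ∉ T := fun i h => hr i ((memT _).mp h).1
  -- key construction: for j ≠ r, (j,r) ∉ R and there is a path from r to j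
  -- all of whose vertices are r, j, or not R-successor of j
  have key : ∀ j : V, j ≠ r → (j, r) ∉ R ∧ ∃ p : List V, IsPathIn T r j p ∧
      ∀ v ∈ p, v = r ∨ v = j ∨ (j, v) ∉ R := by
    intro j hj
    set good : V → Prop := fun m => m ≠ r ∧ (j, m) ∉ R with hgood
    have anc_mem : ∀ k, Anc par good j k → k = j ∨ good k := by
      intro k hk
      induction hk with
      | base => left; rfl
      | step k' h hg ih => right; exact hg
    have hSfin : {k | Anc par good j k}.Finite := Set.toFinite _
    set Sf : Finset V := hSfin.toFinset with hSf
    have hmemS : ∀ k, k ∈ Sf ↔ Anc par good j k := fun k => hSfin.mem_toFinset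
    have hjj : (j, j) ∉ R := fun h => (hirr _ h) rfl
    have hsub : Sf ⊆ (Finset.univ.filter (fun i => (j, i) ∉ R)).erase r := by
      intro k hk
      rcases anc_mem k ((hmemS k).mp hk) with h | h
      · subst h
        exact Finset.mem_erase.mpr ⟨hj, Finset.mem_filter.mpr ⟨Finset.mem_univ _, hjj⟩⟩
      · exact Finset.mem_erase.mpr ⟨h.1, Finset.mem_filter.mpr ⟨Finset.mem_univ _, h.2⟩⟩
    have hjS : j ∈ Sf := (hmemS j).mpr Anc.base
    have hge := hcut j hj Sf hsub hjS
    obtain ⟨a, haF, hxa⟩ := sum_one _ (Finset.filter_subset _ _) hge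
    have haA : a ∈ A := (Finset.mem_filter.mp haF).1
    obtain ⟨h1, h2, h3⟩ := (Finset.mem_filter.mp haF).2
    have haT : (a.1, a.2) ∈ T := by
      rw [Prod.mk.eta]; exact (memT a).mpr ⟨haA, hxa⟩
    have h2r : a.2 ≠ r := by
      rcases anc_mem _ ((hmemS _).mp h3) with h | h
      · rw [h]; exact hj
      · exact h.1
    have hpe : a.1 = par a.2 := hparU a.2 h2r a.1 haT
    have h1R : (j, a.1) ∉ R := (Finset.mem_filter.mp h1).2
    have ha1r : a.1 = r := by
      by_contra hne
      have hg : good (par a.2) := by rw [← hpe]; exact ⟨hne, h1R⟩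
      have hstep : Anc par good j (par a.2) := Anc.step a.2 ((hmemS _).mp h3) hg
      rw [← hpe] at hstep
      exact h2 ((hmemS _).mpr hstep)
    have hjrR : (j, r) ∉ R := ha1r ▸ h1R
    have hrk : (r, a.2) ∈ T := by rw [← ha1r]; exact haT
    -- build a path from any ancestor down to j
    have build : ∀ m, Anc par good j m → ∃ p : List V, p ≠ [] ∧
        p.head? = some m ∧ p.getLast? = some j ∧
        p.Chain' (fun a b => (a, b) ∈ T) ∧ ∀ v ∈ p, v = j ∨ good v := by
      intro m hm
      induction hm with
      | base =>
        refine ⟨[j], by simp, by simp, by simp, List.isChain_singleton _, ?_⟩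
        intro v hv
        left
        simpa using hv
      | step k hk hg ih =>
        obtain ⟨p, hne, hh, hl, hc, hmem⟩ := ih
        have hkr : k ≠ r := by
          rcases anc_mem k hk with h | h
          · rw [h]; exact hj
          · exact h.1
        refine ⟨par k :: p, by simp, by simp, ?_, ?_, ?_⟩
        · cases p with
          | nil => exact absurd rfl hne
          | cons b l => rw [List.getLast?_cons_cons]; exact hl
        · refine List.IsChain.cons hc ?_
          intro y hy
          rw [hh, Option.mem_some_iff] at hy
          subst hy
          exact hparT k hkr
        · intro v hv
          rcases List.mem_cons.mp hv with h | h
          · right; rw [h]; exact hg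
          · exact hmem v h
    obtain ⟨p, hne, hh, hl, hc, hmem⟩ := build a.2 ((hmemS _).mp h3)
    refine ⟨hjrR, r :: p, ⟨by simp, ?_, ?_⟩, ?_⟩
    · cases p with
      | nil => exact absurd rfl hne
      | cons b l => rw [List.getLast?_cons_cons]; exact hl
    · refine List.IsChain.cons hc ?_
      intro y hy
      rw [hh, Option.mem_some_iff] at hy
      subst hy
      exact hrk
    · intro v hv
      rcases List.mem_cons.mp hv with h | h
      · left; exact h
      · rcases hmem v h with h' | h'
        · right; left; exact h'
        · right; right; exact h'.2
  -- uniqueness of reversed paths (backward determinism)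
  have ruin : ∀ (q q' : List V), q.getLast? = some r →
      q.Chain' (fun a b => (b, a) ∈ T) → q'.getLast? = some r →
      q'.Chain' (fun a b => (b, a) ∈ T) → q.head? = q'.head? → q = q' := by
    intro q
    induction q with
    | nil =>
      intro q' _ _ h2' _ hh
      cases q' with
      | nil => rfl
      | cons c' tl' => simp at hh
    | cons c tl ih =>
      intro q' h2 h3 h2' h3' hh
      cases q' with
      | nil => simp at hh
      | cons c' tl' =>
        have hcc : c = c' := by simpa using hh
        subst hcc
        cases tl with
        | nil =>
          have hcr : c = r := by simpa using h2
          cases tl' with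
          | nil => rfl
          | cons i t =>
            exfalso
            have hic : (i, c) ∈ T := (List.isChain_cons_cons.mp h3').1
            exact noR i (hcr ▸ hic)
        | cons i t =>
          have hic : (i, c) ∈ T := (List.isChain_cons_cons.mp h3).1
          have hcr : c ≠ r := fun h => noR i (h ▸ hic)
          cases tl' with
          | nil =>
            exfalso
            exact hcr (by simpa using h2')
          | cons i' t' =>
            have hic' : (i', c) ∈ T := (List.isChain_cons_cons.mp h3').1
            have hii : i = i' := by
              rw [hparU c hcr i hic, hparU c hcr i' hic']
            rw [List.getLast?_cons_cons] at h2 h2'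
            have heq := ih (i' :: t') h2 h3.tail h2' h3'.tail (by simp [hii])
            rw [heq]
  have conv : ∀ (j : V) (p : List V), IsPathIn T r j p ↔
      (p.reverse.head? = some j ∧ p.reverse.getLast? = some r ∧
        p.reverse.Chain' (fun a b => (b, a) ∈ T)) := by
    intro j p
    rw [List.head?_reverse, List.getLast?_reverse]
    exact ⟨fun ⟨a, b, c⟩ => ⟨b, a, List.isChain_reverse.mpr c⟩, fun ⟨a, b, c⟩ => ⟨b, a, List.isChain_reverse.mp c⟩⟩
  have puniq : ∀ (j : V) (p p' : List V),
      IsPathIn T r j p → IsPathIn T r j p' → p = p' := by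
    intro j p p' hp hp'
    rw [conv] at hp hp'
    exact List.reverse_injective
      (ruin p.reverse p'.reverse hp.2.1 hp.2.2 hp'.2.1 hp'.2.2 (hp.1.trans hp'.1.symm))
  have hrpath : IsPathIn T r r [r] := ⟨by simp, by simp, List.isChain_singleton _⟩
  constructor
  · refine ⟨hpar, noR, ?_⟩
    intro j
    by_cases hj : j = r
    · rw [hj]
      exact ⟨[r], hrpath, fun p hp => puniq r p [r] hp hrpath⟩
    · obtain ⟨-, p, hp, -⟩ := key j hj
      exact ⟨p, hp, fun p' hp' => puniq j p' p hp' hp⟩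
  · rintro ⟨s, t⟩ hq p hp hmem
    have hst : s ≠ t := hirr _ hq
    by_cases hs : s = r
    · rw [hs] at hp
      have hpe : p = [r] := puniq r p [r] hp hrpath
      rw [hpe] at hmem
      simp at hmem
      exact hst (hs.trans hmem.symm)
    · obtain ⟨hsr, w, hw, hwmem⟩ := key s hs
      have hpw : p = w := puniq s p w hp hw
      rw [hpw] at hmem
      rcases hwmem t hmem with h | h | h
      · exact hsr (h ▸ hq)
      · exact hst h.symm
      · exact h hq
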